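/- Let a > 0 and let (u,v) range over the open set where sin(u+v) ≠ 1 and sin(u+v) ≠ −1. Define F(u,v) = a(1 − sin(u+v)), r(u,v) = 1/F(u,v), θ(u,v) = u − v + π/2, and f(ρ) = 1 − 2aρ. Then on this set: (i) (∂_u r)²/f(r) + r²(∂_u θ)² = 0 and (∂_v r)²/f(r) + r²(∂_v θ)² = 0; (ii) (∂_u r)(∂_v r)/f(r) + r²(∂_u θ)(∂_v θ) = −2/F²; (iii) −f(r) = a²cos²(u+v)/F²; (iv) r²·sin²θ = cos²(u−v)/F². -/

import Mathlib

lemma aux_deriv_r (a w : ℝ) (hne : a * (1 - Real.sin w) ≠ 0) {g : ℝ → ℝ} {t : ℝ}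
    (hg : HasDerivAt g 1 t) (hw : g t = w) :
    deriv (fun x => 1 / (a * (1 - Real.sin (g x)))) t
      = a * Real.cos w / (a * (1 - Real.sin w)) ^ 2 := by
  have h1 : HasDerivAt (fun x => a * (1 - Real.sin (g x))) (-(a * Real.cos w)) t := by
    have := (((Real.hasDerivAt_sin (g t)).comp t hg).const_sub 1).const_mul a
    simpa [hw] using this
  have hne' : a * (1 - Real.sin (g t)) ≠ 0 := by rw [hw]; exact hne
  have h2 : HasDerivAt (fun x => (a * (1 - Real.sin (g x)))⁻¹)
      (- -(a * Real.cos w) / (a * (1 - Real.sin (g t))) ^ 2) t := h1.inv hne'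
  have h3 : (fun x => 1 / (a * (1 - Real.sin (g x))))
      = fun x => (a * (1 - Real.sin (g x)))⁻¹ := by
    funext x; simp [one_div]
  rw [h3, h2.deriv, hw]
  ring

theorem stmt_17 (a : ℝ) (ha : 0 < a)
    (F r θ : ℝ → ℝ → ℝ) (f : ℝ → ℝ)
    (hF : F = fun u v => a * (1 - Real.sin (u + v)))
    (hr : r = fun u v => 1 / F u v)
    (hθ : θ = fun u v => u - v + Real.pi / 2)
    (hf : f = fun ρ => 1 - 2 * a * ρ) :
    ∀ u v : ℝ, Real.sin (u + v) ≠ 1 → Real.sin (u + v) ≠ -1 →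
      ((deriv (fun x => r x v) u) ^ 2 / f (r u v)
          + (r u v) ^ 2 * (deriv (fun x => θ x v) u) ^ 2 = 0) ∧
      ((deriv (fun y => r u y) v) ^ 2 / f (r u v)
          + (r u v) ^ 2 * (deriv (fun y => θ u y) v) ^ 2 = 0) ∧
      ((deriv (fun x => r x v) u) * (deriv (fun y => r u y) v) / f (r u v)
          + (r u v) ^ 2 * (deriv (fun x => θ x v) u) * (deriv (fun y => θ u y) v)
          = -2 / (F u v) ^ 2) ∧
      (-(f (r u v)) = a ^ 2 * (Real.cos (u + v)) ^ 2 / (F u v) ^ 2) ∧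
      ((r u v) ^ 2 * (Real.sin (θ u v)) ^ 2
          = (Real.cos (u - v)) ^ 2 / (F u v) ^ 2) := by
  subst hF hr hθ hf
  intro u v h1 h2
  set s := Real.sin (u + v) with hs
  set c := Real.cos (u + v) with hc
  have hs1 : 1 - s ≠ 0 := fun h => h1 (by linarith [sub_eq_zero.mp h])
  have hs2 : 1 + s ≠ 0 := fun h => h2 (by linarith)
  have hF0 : a * (1 - s) ≠ 0 := mul_ne_zero ha.ne' hs1
  have hcs : c ^ 2 = (1 - s) * (1 + s) := by
    have := Real.sin_sq_add_cos_sq (u + v); rw [← hs, ← hc] at this; nlinarith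
  -- derivatives of r
  have hdu : deriv (fun x => (fun u v => 1 / ((fun u v => a * (1 - Real.sin (u + v))) u v)) x v) u
      = a * c / (a * (1 - s)) ^ 2 := by
    simpa using aux_deriv_r a (u + v) hF0 ((hasDerivAt_id u).add_const v) rfl
  have hdv : deriv (fun y => (fun u v => 1 / ((fun u v => a * (1 - Real.sin (u + v))) u v)) u y) v
      = a * c / (a * (1 - s)) ^ 2 := by
    simpa using aux_deriv_r a (u + v) hF0 ((hasDerivAt_id v).const_add u) rfl
  have hθu : deriv (fun x => (fun u v => u - v + Real.pi / 2) x v) u = 1 := by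
    simpa using (((hasDerivAt_id u).sub_const v).add_const (Real.pi / 2)).deriv
  have hθv : deriv (fun y => (fun u v => u - v + Real.pi / 2) u y) v = -1 := by
    simpa using (((hasDerivAt_id v).const_sub u).add_const (Real.pi / 2)).deriv
  simp only [hdu, hdv, hθu, hθv]
  have hFbeta : ((fun u v => a * (1 - Real.sin (u + v))) u v) = a * (1 - s) := rfl
  simp only [hFbeta]
  have hfval : (1 : ℝ) - 2 * a * (1 / (a * (1 - s))) = -(1 + s) / (1 - s) := by
    field_simp; ring
  have hns : (-s + -1 : ℝ) ≠ 0 := by intro h; exact hs2 (by linarith)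
  have hsin : Real.sin (u - v + Real.pi / 2) = Real.cos (u - v) := by
    rw [Real.sin_add_pi_div_two]
  refine ⟨?_, ?_, ?_, ?_, ?_⟩
  · simp only [hfval]
    field_simp [hs1, hs2, hns, ha.ne']
    linear_combination (-1) * hcs
  · simp only [hfval]
    field_simp [hs1, hs2, hns, ha.ne']
    linear_combination (-1) * hcs
  · simp only [hfval]
    field_simp [hs1, hs2, hns, ha.ne']
    linear_combination (-1) * hcs
  · simp only [hfval]
    field_simp [hs1, hs2, hns, ha.ne']
    linear_combination (-1) * hcs
  · simp only [hsin]
    field_simp [hs1, ha.ne']
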